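/- arXiv:2210.02067 — 7 statements merged into one kernel-verified Lean document; each statement's English description precedes it below -/
import Mathlib

section
/- If a relation ≈ on strings satisfies the symmetric law and the two-transitive law (W≈X, X≈Y, Y≈Z implies W≈Z) and substring consistency, and P is a string with P ≈ reverse(P), and a substring P[i..j] satisfies P[i..j] ≈ reverse(P[i..j]), then the substring at the symmetric position, P[|P|-j+1..|P|-i+1], also satisfies P[|P|-j+1..|P|-i+1] ≈ reverse(P[|P|-j+1..|P|-i+1]). -/
/-- `sub S i j` is the substring `S[i..j]` (1-indexed, inclusive). -/
def sub {α : Type*} (S : List α) (i j : ℕ) : List α :=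
  (S.drop (i - 1)).take (j - i + 1)

lemma sub_reverse {α : Type*} (S : List α) (i j : ℕ) (h1 : 1 ≤ i) (hij : i ≤ j)
    (hj : j ≤ S.length) :
    sub S.reverse i j = (sub S (S.length - j + 1) (S.length - i + 1)).reverse := by
  unfold sub
  have e1 : S.length - j + 1 - 1 = S.length - j := by omega
  have e2 : S.length - i + 1 - (S.length - j + 1) + 1 = j - i + 1 := by omega
  rw [e1, e2, List.reverse_take, List.reverse_drop]
  simp only [List.length_drop]
  have e4 : S.length - (S.length - j) - (j - i + 1) = i - 1 := by omega
  have e3 : S.length - (S.length - j) = j := by omega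
  rw [e4, e3, List.drop_take]
  congr 1
  omega

theorem stmt0 {α : Type*} (r : List α → List α → Prop)
    (hsymm : ∀ X Y : List α, r X Y → r Y X)
    (htt : ∀ W X Y Z : List α, r W X → r X Y → r Y Z → r W Z)
    (hsub : ∀ X Y : List α, r X Y → ∀ i j : ℕ, 1 ≤ i → i ≤ j → j ≤ X.length →
      r (sub X i j) (sub Y i j))
    (P : List α) (hP : r P P.reverse)
    (i j : ℕ) (h1 : 1 ≤ i) (hij : i ≤ j) (hj : j ≤ P.length)
    (hpal : r (sub P i j) (sub P i j).reverse) :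
    r (sub P (P.length - j + 1) (P.length - i + 1))
      (sub P (P.length - j + 1) (P.length - i + 1)).reverse := by
  set n := P.length
  set A := sub P (n - j + 1) (n - i + 1) with hA
  set B := sub P i j with hB
  -- r A B.reverse : apply hsub to hP at positions n-j+1, n-i+1
  have h1' : 1 ≤ n - j + 1 := by omega
  have hij' : n - j + 1 ≤ n - i + 1 := by omega
  have hj' : n - i + 1 ≤ n := by omega
  have hAB : r A B.reverse := by
    have := hsub P P.reverse hP (n - j + 1) (n - i + 1) h1' hij' hj'
    have key : sub P.reverse (n - j + 1) (n - i + 1) = B.reverse := by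
      rw [sub_reverse P (n - j + 1) (n - i + 1) h1' hij' hj']
      have e1 : n - (n - i + 1) + 1 = i := by omega
      have e2 : n - (n - j + 1) + 1 = j := by omega
      rw [e1, e2]
    rwa [key] at this
  -- r B A.reverse : apply hsub to (r P.reverse P) at positions i, j
  have hBA : r B A.reverse := by
    have := hsub P.reverse P (hsymm _ _ hP) i j h1 hij (by simpa using hj)
    have key : sub P.reverse i j = A.reverse := sub_reverse P i j h1 hij hj
    rw [key] at this
    exact hsymm _ _ this
  exact htt A B.reverse B A.reverse hAB (hsymm _ _ hpal) hBA
end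

section
/- A string P is an order-preserving rev-palindrome if and only if P is a palindrome under exact matching, i.e., P = reverse(P). -/
/-- `X` and `Y` order-preserving match. -/
def opMatch {α : Type*} [LinearOrder α] [Inhabited α] (X Y : List α) : Prop :=
  X.length = Y.length ∧
  ∀ i j, i < X.length → j < X.length →
    (X.getD i default ≤ X.getD j default ↔ Y.getD i default ≤ Y.getD j default)

theorem stmt2 {α : Type*} [LinearOrder α] [Inhabited α] (P : List α) :
    opMatch P P.reverse ↔ P = P.reverse := by
  constructor
  · rintro ⟨hlen, h⟩
    apply List.ext_getElem (by simp)
    intro i h1 h2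
    have hn : i < P.length := h1
    have hn' : P.length - 1 - i < P.length := by omega
    have key := h i (P.length - 1 - i) hn hn'
    have e1 : P.reverse.getD i default = P.getD (P.length - 1 - i) default := by
      rw [List.getD_eq_getElem _ _ (by simpa using hn),
          List.getD_eq_getElem _ _ hn', List.getElem_reverse]
    have e2 : P.reverse.getD (P.length - 1 - i) default = P.getD i default := by
      rw [List.getD_eq_getElem _ _ (by simpa using hn'),
          List.getD_eq_getElem _ _ hn, List.getElem_reverse]
      congr 1
      omega
    rw [e1, e2] at key
    have : P.getD i default = P.getD (P.length - 1 - i) default := by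
      rcases le_total (P.getD i default) (P.getD (P.length - 1 - i) default) with hle | hle
      · exact le_antisymm hle (key.mp hle)
      · exact le_antisymm (key.mpr hle) hle
    rw [List.getD_eq_getElem _ _ hn, List.getD_eq_getElem _ _ hn'] at this
    rw [this, List.getElem_reverse]
  · intro h
    exact ⟨by rw [← h], fun i j _ _ => by rw [← h]⟩
end

section
/- For any two equal-length strings X and Y over a parameterized alphabet Π, X and Y parameterized match (there exists a bijection f on Π with f applied characterwise to Y equals X) if and only if their previous encodings are equal: PE_X = PE_Y. -/
/-- previous-encoding value at (0-indexed) position `p`. -/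
def peAt {π : Type*} [DecidableEq π] (T : List π) (p : ℕ) : ℕ :=
  match ((List.range p).filter (fun q => T[q]? = T[p]?)).max? with
  | some q => p - q
  | none => 0

/-- the previous encoding `PE_T` of `T`. -/
def pe {π : Type*} [DecidableEq π] (T : List π) : List ℕ :=
  (List.range T.length).map (peAt T)

section aux

variable {π : Type*} [DecidableEq π]

/-- the previous-occurrence set -/
def prevS (T : List π) (p : ℕ) : List ℕ :=
  (List.range p).filter (fun q => T[q]? = T[p]?)

lemma mem_prevS {T : List π} {p q : ℕ} : q ∈ prevS T p ↔ q < p ∧ T[q]? = T[p]? := by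
  simp [prevS, List.mem_filter]

lemma peAt_eq (T : List π) (p : ℕ) :
    peAt T p = match (prevS T p).max? with | some q => p - q | none => 0 := rfl

lemma peAt_eq' (T : List π) (p : ℕ) :
    peAt T p = p - ((prevS T p).max?.getD p) := by
  rw [peAt_eq]
  rcases hM : (prevS T p).max? with _ | m <;> simp

lemma prevS_max_lt {T : List π} {p m : ℕ} (hM : (prevS T p).max? = some m) : m < p :=
  (mem_prevS.1 (List.max?_mem hM)).1

/-- equal `pe`'s give equal max previous-occurrence pointers at every in-range position -/
lemma maxEq {X Y : List π} (h : X.length = Y.length) (hpe : pe X = pe Y)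
    {p : ℕ} (hp : p < X.length) : (prevS X p).max? = (prevS Y p).max? := by
  have hx : peAt X p = peAt Y p := by
    have h1 : (pe X)[p]? = (pe Y)[p]? := by rw [hpe]
    simpa [pe, h, List.getElem?_map, List.getElem?_range, hp, h ▸ hp] using h1
  rw [peAt_eq', peAt_eq'] at hx
  rcases hX : (prevS X p).max? with _ | m1
  · rcases hY : (prevS Y p).max? with _ | m2
    · rfl
    · have h2 := prevS_max_lt hY
      rw [hX, hY] at hx
      simp only [Option.getD_some, Option.getD_none] at hx
      omega
  · rcases hY : (prevS Y p).max? with _ | m2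
    · have h1 := prevS_max_lt hX
      rw [hX, hY] at hx
      simp only [Option.getD_some, Option.getD_none] at hx
      omega
    · have h1 := prevS_max_lt hX
      have h2 := prevS_max_lt hY
      rw [hX, hY] at hx
      simp only [Option.getD_some, Option.getD_none] at hx
      congr 1
      omega

/-- the key combinatorial lemma -/
lemma key {X Y : List π} (h : X.length = Y.length) (hpe : pe X = pe Y) :
    ∀ p, p < X.length → ∀ q, q < p → (X[q]? = X[p]? ↔ Y[q]? = Y[p]?) := by
  intro p
  induction p using Nat.strong_induction_on with
  | _ p ih =>
    intro hp q hq
    rcases hM : (prevS X p).max? with _ | m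
    · have hM' : (prevS Y p).max? = none := (maxEq h hpe hp) ▸ hM
      rw [List.max?_eq_none_iff] at hM hM'
      constructor
      · intro hxy
        exact absurd (List.eq_nil_iff_forall_not_mem.1 hM q (mem_prevS.2 ⟨hq, hxy⟩)) (by simp)
      · intro hxy
        exact absurd (List.eq_nil_iff_forall_not_mem.1 hM' q (mem_prevS.2 ⟨hq, hxy⟩)) (by simp)
    · have hM' : (prevS Y p).max? = some m := (maxEq h hpe hp) ▸ hM
      have hXm := mem_prevS.1 (List.max?_mem hM)
      have hYm := mem_prevS.1 (List.max?_mem hM')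
      have hXmax : ∀ b ∈ prevS X p, b ≤ m :=
        (List.max?_le_iff hM).1 le_rfl
      have hYmax : ∀ b ∈ prevS Y p, b ≤ m :=
        (List.max?_le_iff hM').1 le_rfl
      rcases lt_trichotomy q m with hqm | rfl | hqm
      · -- q < m : use IH at m
        have hiq := ih m hXm.1 (lt_trans hXm.1 hp) q hqm
        rw [show (X[q]? = X[p]?) ↔ (X[q]? = X[m]?) by rw [hXm.2],
          show (Y[q]? = Y[p]?) ↔ (Y[q]? = Y[m]?) by rw [hYm.2]]
        exact hiq
      · exact ⟨fun _ => hYm.2, fun _ => hXm.2⟩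
      · constructor
        · intro hxy
          exact absurd (hXmax q (mem_prevS.2 ⟨hq, hxy⟩)) (by omega)
        · intro hxy
          exact absurd (hYmax q (mem_prevS.2 ⟨hq, hxy⟩)) (by omega)

lemma key' {X Y : List π} (h : X.length = Y.length) (hpe : pe X = pe Y)
    {p q : ℕ} (hp : p < X.length) (hq : q < X.length) :
    (X[q]? = X[p]? ↔ Y[q]? = Y[p]?) := by
  rcases lt_trichotomy q p with hqp | rfl | hqp
  · exact key h hpe p hp q hqp
  · simp
  · exact ⟨fun hxy => (key h hpe q hq p hqp).1 hxy.symm |>.symm,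
      fun hxy => (key h hpe q hq p hqp).2 hxy.symm |>.symm⟩

end aux

theorem stmt4 {π : Type*} [DecidableEq π] (X Y : List π) (h : X.length = Y.length) :
    (∃ f : π ≃ π, X = Y.map f) ↔ pe X = pe Y := by
  constructor
  · rintro ⟨f, rfl⟩
    unfold pe
    rw [List.length_map]
    apply List.map_congr_left
    intro p hp
    rw [List.mem_range] at hp
    unfold peAt
    have hfilter : ∀ q : ℕ, ((Y.map ⇑f)[q]? = (Y.map ⇑f)[p]?) ↔ (Y[q]? = Y[p]?) := by
      intro q
      rw [List.getElem?_map, List.getElem?_map]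
      exact (Option.map_injective f.injective).eq_iff
    have heq : (List.range p).filter (fun q => decide ((Y.map ⇑f)[q]? = (Y.map ⇑f)[p]?)) =
        (List.range p).filter (fun q => decide (Y[q]? = Y[p]?)) := by
      apply List.filter_congr
      intro q _
      exact decide_eq_decide.2 (hfilter q)
    rw [heq]
  · intro hpe
    classical
    have hidx : ∀ a ∈ Y, List.idxOf a Y < X.length := fun a ha => by
      have := List.idxOf_lt_length_iff.2 ha; omega
    set s : Set π := {a | a ∈ Y} with hs
    have hinj : Set.InjOn (fun a => X[List.idxOf a Y]?) s := by
      intro a ha b hb hab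
      simp only at hab
      have hak : Y[List.idxOf a Y]? = Y[List.idxOf b Y]? :=
        (key' h hpe (hidx b hb) (hidx a ha)).1 hab
      rw [List.getElem?_idxOf ha, List.getElem?_idxOf hb] at hak
      exact Option.some_injective _ hak
    have hinj' : Function.Injective
        (fun a : s => X[List.idxOf a.1 Y]'(hidx a.1 a.2)) := by
      intro a b hab
      apply Subtype.ext
      apply hinj a.2 b.2
      simp only [List.getElem?_eq_getElem (hidx a.1 a.2), List.getElem?_eq_getElem (hidx b.1 b.2)]
      exact congrArg some hab
    let emb : s ↪ π := ⟨_, hinj'⟩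
    have hsfin : s.Finite := Y.finite_toSet
    have hext : ∃ g : π ≃ π, ∀ x : s, g x = emb x := by
      rcases finite_or_infinite π with hfin | hinf
      · exact Cardinal.extend_function_finite (α := π) (β := π) (s := s) emb ⟨Equiv.refl π⟩
      · haveI := hsfin.to_subtype
        refine Cardinal.extend_function_of_lt emb ?_ ⟨Equiv.refl π⟩
        exact lt_of_lt_of_le (Cardinal.lt_aleph0_of_finite s) (Cardinal.aleph0_le_mk π)
    obtain ⟨g, hg⟩ := hext
    refine ⟨g, ?_⟩
    apply List.ext_getElem (by simp [h])
    intro i h1 h2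
    rw [List.getElem_map]
    have hmem : Y[i] ∈ Y := List.getElem_mem _
    have hgY : g Y[i] = X[List.idxOf Y[i] Y]'(hidx _ hmem) := hg ⟨Y[i], hmem⟩
    rw [hgY]
    have hYeq : Y[List.idxOf Y[i] Y]? = Y[i]? := by
      rw [List.getElem?_idxOf hmem, List.getElem?_eq_getElem (h ▸ h1)]
    have hXeq : X[List.idxOf Y[i] Y]? = X[i]? :=
      (key' h hpe h1 (hidx _ hmem)).2 hYeq
    rw [List.getElem?_eq_getElem (hidx _ hmem), List.getElem?_eq_getElem h1] at hXeq
    exact Option.some_injective _ hXeq.symm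
end

section
/- For any two equal-length strings X and Y over a linearly ordered alphabet, X and Y order-preserving match if and only if Code_X = Code_Y, where Code_T is the sequence of pairs (α_T[i], β_T[i]) for i = 1,...,|T|. -/
/-- `α_T` value at (0-indexed) position `p`: rightmost occurrence of the largest
value `≤ T[p]` among the previous positions, reported 1-indexed, `0` if none. -/
def alphaAt {α : Type*} [LinearOrder α] [Inhabited α] (T : List α) (p : ℕ) : ℕ :=
  let v := fun q => T.getD q default
  let cand := (List.range p).filter (fun q => v q ≤ v p)
  match (cand.map v).max? with
  | none => 0
  | some m =>
    match (cand.filter (fun q => v q = m)).max? with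
    | none => 0
    | some q => q + 1

/-- `β_T` value at (0-indexed) position `p`: rightmost occurrence of the smallest
value `≥ T[p]` among the previous positions, reported 1-indexed, `0` if none. -/
def betaAt {α : Type*} [LinearOrder α] [Inhabited α] (T : List α) (p : ℕ) : ℕ :=
  let v := fun q => T.getD q default
  let cand := (List.range p).filter (fun q => v p ≤ v q)
  match (cand.map v).min? with
  | none => 0
  | some m =>
    match (cand.filter (fun q => v q = m)).max? with
    | none => 0
    | some q => q + 1

/-- the order-preserving code of `T`. -/
def code {α : Type*} [LinearOrder α] [Inhabited α] (T : List α) : List (ℕ × ℕ) :=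
  (List.range T.length).map (fun p => (alphaAt T p, betaAt T p))

section Aux

variable {α : Type*} [LinearOrder α] [Inhabited α]

private lemma max?_spec' {β : Type*} [LinearOrder β] {l : List β} {a : β}
    (h : l.max? = some a) : a ∈ l ∧ ∀ b ∈ l, b ≤ a :=
  ⟨List.max?_mem h, (List.max?_le_iff h).mp le_rfl⟩

private lemma min?_spec' {β : Type*} [LinearOrder β] {l : List β} {a : β}
    (h : l.min? = some a) : a ∈ l ∧ ∀ b ∈ l, a ≤ b :=
  ⟨List.min?_mem h, (List.le_min?_iff h).mp le_rfl⟩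

private lemma alpha_spec (T : List α) (n : ℕ) :
    (alphaAt T n = 0 ∧ ∀ q < n, ¬ (T.getD q default ≤ T.getD n default)) ∨
    (∃ q, alphaAt T n = q + 1 ∧ q < n ∧ T.getD q default ≤ T.getD n default ∧
      ∀ r < n, T.getD r default ≤ T.getD n default → T.getD r default ≤ T.getD q default) := by
  set v := fun q => T.getD q default with hv
  set cand := (List.range n).filter (fun q => v q ≤ v n) with hcand
  have hval : alphaAt T n =
      match (cand.map v).max? with
      | none => 0
      | some m =>
        match (cand.filter (fun q => v q = m)).max? with
        | none => 0
        | some q => q + 1 := rfl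
  cases hm : (cand.map v).max? with
  | none =>
    left
    rw [List.max?_eq_none_iff, List.map_eq_nil_iff] at hm
    constructor
    · rw [hval, hm]; rfl
    · intro q hq hle
      have : q ∈ cand := by
        rw [hcand]; simp [List.mem_filter, List.mem_range, hq, hle]; exact hle
      rw [hm] at this; exact absurd this (List.not_mem_nil (a := q))
  | some m =>
    right
    obtain ⟨hmem, hmax⟩ := max?_spec' hm
    obtain ⟨q0, hq0c, hq0v⟩ := List.mem_map.mp hmem
    have hq0f : q0 ∈ cand.filter (fun q => v q = m) := by
      simp [List.mem_filter, hq0c, hq0v]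
    cases hq : (cand.filter (fun q => v q = m)).max? with
    | none =>
      rw [List.max?_eq_none_iff] at hq
      rw [hq] at hq0f; exact absurd hq0f (List.not_mem_nil (a := q0))
    | some q =>
      obtain ⟨hqmem, _⟩ := max?_spec' hq
      have hqc : q ∈ cand ∧ v q = m := by
        simpa [List.mem_filter] using hqmem
      have hqrange : q ∈ List.range n ∧ v q ≤ v n := by
        simpa [hcand, List.mem_filter] using hqc.1
      refine ⟨q, ?_, List.mem_range.mp hqrange.1, hqrange.2, ?_⟩
      · rw [hval]; simp only [hm, hq]
      · intro r hr hrle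
        have hrc : r ∈ cand := by
          rw [hcand]; simp [List.mem_filter, List.mem_range, hr, hrle]; exact hrle
        have : v r ≤ m := hmax _ (List.mem_map.mpr ⟨r, hrc, rfl⟩)
        rw [← hqc.2] at this; exact this

private lemma beta_spec (T : List α) (n : ℕ) :
    (betaAt T n = 0 ∧ ∀ q < n, ¬ (T.getD n default ≤ T.getD q default)) ∨
    (∃ q, betaAt T n = q + 1 ∧ q < n ∧ T.getD n default ≤ T.getD q default ∧
      ∀ r < n, T.getD n default ≤ T.getD r default → T.getD q default ≤ T.getD r default) := by
  set v := fun q => T.getD q default with hv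
  set cand := (List.range n).filter (fun q => v n ≤ v q) with hcand
  have hval : betaAt T n =
      match (cand.map v).min? with
      | none => 0
      | some m =>
        match (cand.filter (fun q => v q = m)).max? with
        | none => 0
        | some q => q + 1 := rfl
  cases hm : (cand.map v).min? with
  | none =>
    left
    rw [List.min?_eq_none_iff, List.map_eq_nil_iff] at hm
    constructor
    · rw [hval, hm]; rfl
    · intro q hq hle
      have : q ∈ cand := by
        rw [hcand]; simp [List.mem_filter, List.mem_range, hq, hle]; exact hle
      rw [hm] at this; exact absurd this (List.not_mem_nil (a := q))
  | some m =>
    right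
    obtain ⟨hmem, hmin⟩ := min?_spec' hm
    obtain ⟨q0, hq0c, hq0v⟩ := List.mem_map.mp hmem
    have hq0f : q0 ∈ cand.filter (fun q => v q = m) := by
      simp [List.mem_filter, hq0c, hq0v]
    cases hq : (cand.filter (fun q => v q = m)).max? with
    | none =>
      rw [List.max?_eq_none_iff] at hq
      rw [hq] at hq0f; exact absurd hq0f (List.not_mem_nil (a := q0))
    | some q =>
      obtain ⟨hqmem, _⟩ := max?_spec' hq
      have hqc : q ∈ cand ∧ v q = m := by
        simpa [List.mem_filter] using hqmem
      have hqrange : q ∈ List.range n ∧ v n ≤ v q := by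
        simpa [hcand, List.mem_filter] using hqc.1
      refine ⟨q, ?_, List.mem_range.mp hqrange.1, hqrange.2, ?_⟩
      · rw [hval]; simp only [hm, hq]
      · intro r hr hrle
        have hrc : r ∈ cand := by
          rw [hcand]; simp [List.mem_filter, List.mem_range, hr, hrle]; exact hrle
        have : m ≤ v r := hmin _ (List.mem_map.mpr ⟨r, hrc, rfl⟩)
        rw [← hqc.2] at this; exact this

private lemma alpha_congr (X Y : List α) (n : ℕ)
    (h : ∀ i j, i ≤ n → j ≤ n →
      (X.getD i default ≤ X.getD j default ↔ Y.getD i default ≤ Y.getD j default)) :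
    alphaAt X n = alphaAt Y n := by
  set vX := fun q => X.getD q default with hvX
  set vY := fun q => Y.getD q default with hvY
  have hcand : (List.range n).filter (fun q => vX q ≤ vX n)
      = (List.range n).filter (fun q => vY q ≤ vY n) := by
    apply List.filter_congr
    intro q hq
    have hq' : q ≤ n := le_of_lt (List.mem_range.mp hq)
    simp only [decide_eq_decide]
    exact h q n hq' le_rfl
  set cand := (List.range n).filter (fun q => vX q ≤ vX n) with hc
  have hltn : ∀ q ∈ cand, q ≤ n := by
    intro q hqc
    have : q ∈ List.range n := (List.mem_filter.mp hqc).1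
    exact le_of_lt (List.mem_range.mp this)
  have hvalX : alphaAt X n =
      match (cand.map vX).max? with
      | none => 0
      | some m =>
        match (cand.filter (fun q => vX q = m)).max? with
        | none => 0
        | some q => q + 1 := rfl
  have hvalY : alphaAt Y n =
      match (cand.map vY).max? with
      | none => 0
      | some m =>
        match (cand.filter (fun q => vY q = m)).max? with
        | none => 0
        | some q => q + 1 := by
    conv_lhs => rw [show alphaAt Y n =
      match ((((List.range n).filter (fun q => vY q ≤ vY n))).map vY).max? with
      | none => 0
      | some m =>
        match ((((List.range n).filter (fun q => vY q ≤ vY n))).filter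
            (fun q => vY q = m)).max? with
        | none => 0
        | some q => q + 1 from rfl]
    rw [← hcand]
  cases hmx : (cand.map vX).max? with
  | none =>
    have hnil : cand = [] := by
      simpa [List.map_eq_nil_iff] using List.max?_eq_none_iff.mp hmx
    rw [hvalX, hvalY, hnil]
    rfl
  | some mX =>
    cases hmy : (cand.map vY).max? with
    | none =>
      have hnil : cand = [] := by
        simpa [List.map_eq_nil_iff] using List.max?_eq_none_iff.mp hmy
      rw [hnil] at hmx; simp at hmx
    | some mY =>
      obtain ⟨hmemX, hmaxX⟩ := max?_spec' hmx
      obtain ⟨hmemY, hmaxY⟩ := max?_spec' hmy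
      obtain ⟨qX, hqXc, hqXv⟩ := List.mem_map.mp hmemX
      obtain ⟨qY, hqYc, hqYv⟩ := List.mem_map.mp hmemY
      have hqXn := hltn _ hqXc
      have hqYn := hltn _ hqYc
      have key : vY qX = mY := by
        refine le_antisymm (hmaxY _ (List.mem_map.mpr ⟨qX, hqXc, rfl⟩)) ?_
        rw [← hqYv]
        refine (h qY qX hqYn hqXn).mp ?_
        show vX qY ≤ vX qX
        rw [hqXv]
        exact hmaxX _ (List.mem_map.mpr ⟨qY, hqYc, rfl⟩)
      have hfilter : cand.filter (fun q => vX q = mX) = cand.filter (fun q => vY q = mY) := by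
        apply List.filter_congr
        intro q hqc
        have hqn := hltn _ hqc
        simp only [decide_eq_decide]
        constructor
        · intro e
          rw [← key]
          have e' : vX q = vX qX := e.trans hqXv.symm
          exact le_antisymm ((h q qX hqn hqXn).mp e'.le) ((h qX q hqXn hqn).mp e'.ge)
        · intro e
          rw [← hqXv]
          have e' : vY q = vY qX := e.trans key.symm
          exact le_antisymm ((h q qX hqn hqXn).mpr e'.le) ((h qX q hqXn hqn).mpr e'.ge)
      rw [hvalX, hvalY]
      simp only [hmx, hmy]
      rw [hfilter]

private lemma beta_congr (X Y : List α) (n : ℕ)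
    (h : ∀ i j, i ≤ n → j ≤ n →
      (X.getD i default ≤ X.getD j default ↔ Y.getD i default ≤ Y.getD j default)) :
    betaAt X n = betaAt Y n := by
  set vX := fun q => X.getD q default with hvX
  set vY := fun q => Y.getD q default with hvY
  have hcand : (List.range n).filter (fun q => vX n ≤ vX q)
      = (List.range n).filter (fun q => vY n ≤ vY q) := by
    apply List.filter_congr
    intro q hq
    have hq' : q ≤ n := le_of_lt (List.mem_range.mp hq)
    simp only [decide_eq_decide]
    exact h n q le_rfl hq'
  set cand := (List.range n).filter (fun q => vX n ≤ vX q) with hc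
  have hltn : ∀ q ∈ cand, q ≤ n := by
    intro q hqc
    have : q ∈ List.range n := (List.mem_filter.mp hqc).1
    exact le_of_lt (List.mem_range.mp this)
  have hvalX : betaAt X n =
      match (cand.map vX).min? with
      | none => 0
      | some m =>
        match (cand.filter (fun q => vX q = m)).max? with
        | none => 0
        | some q => q + 1 := rfl
  have hvalY : betaAt Y n =
      match (cand.map vY).min? with
      | none => 0
      | some m =>
        match (cand.filter (fun q => vY q = m)).max? with
        | none => 0
        | some q => q + 1 := by
    conv_lhs => rw [show betaAt Y n =
      match ((((List.range n).filter (fun q => vY n ≤ vY q))).map vY).min? with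
      | none => 0
      | some m =>
        match ((((List.range n).filter (fun q => vY n ≤ vY q))).filter
            (fun q => vY q = m)).max? with
        | none => 0
        | some q => q + 1 from rfl]
    rw [← hcand]
  cases hmx : (cand.map vX).min? with
  | none =>
    have hnil : cand = [] := by
      simpa [List.map_eq_nil_iff] using List.min?_eq_none_iff.mp hmx
    rw [hvalX, hvalY, hnil]
    rfl
  | some mX =>
    cases hmy : (cand.map vY).min? with
    | none =>
      have hnil : cand = [] := by
        simpa [List.map_eq_nil_iff] using List.min?_eq_none_iff.mp hmy
      rw [hnil] at hmx; simp at hmx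
    | some mY =>
      obtain ⟨hmemX, hminX⟩ := min?_spec' hmx
      obtain ⟨hmemY, hminY⟩ := min?_spec' hmy
      obtain ⟨qX, hqXc, hqXv⟩ := List.mem_map.mp hmemX
      obtain ⟨qY, hqYc, hqYv⟩ := List.mem_map.mp hmemY
      have hqXn := hltn _ hqXc
      have hqYn := hltn _ hqYc
      have key : vY qX = mY := by
        refine le_antisymm ?_ (hminY _ (List.mem_map.mpr ⟨qX, hqXc, rfl⟩))
        rw [← hqYv]
        refine (h qX qY hqXn hqYn).mp ?_
        show vX qX ≤ vX qY
        rw [hqXv]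
        exact hminX _ (List.mem_map.mpr ⟨qY, hqYc, rfl⟩)
      have hfilter : cand.filter (fun q => vX q = mX) = cand.filter (fun q => vY q = mY) := by
        apply List.filter_congr
        intro q hqc
        have hqn := hltn _ hqc
        simp only [decide_eq_decide]
        constructor
        · intro e
          rw [← key]
          have e' : vX q = vX qX := e.trans hqXv.symm
          exact le_antisymm ((h q qX hqn hqXn).mp e'.le) ((h qX q hqXn hqn).mp e'.ge)
        · intro e
          rw [← hqXv]
          have e' : vY q = vY qX := e.trans key.symm
          exact le_antisymm ((h q qX hqn hqXn).mpr e'.le) ((h qX q hqXn hqn).mpr e'.ge)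
      rw [hvalX, hvalY]
      simp only [hmx, hmy]
      rw [hfilter]

private lemma back_aux (X Y : List α) (N : ℕ)
    (hA : ∀ p, p < N → alphaAt X p = alphaAt Y p)
    (hB : ∀ p, p < N → betaAt X p = betaAt Y p) :
    ∀ n, n ≤ N → ∀ i j, i < n → j < n →
      (X.getD i default ≤ X.getD j default ↔ Y.getD i default ≤ Y.getD j default) := by
  intro n
  induction n with
  | zero => intro _ i j hi hj; omega
  | succ n ih =>
    intro hn i j hi hj
    have hjN : n < N := by omega
    replace ih := ih (by omega)
    rcases Nat.lt_succ_iff_lt_or_eq.mp hi with hi' | hi'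
    · rcases Nat.lt_succ_iff_lt_or_eq.mp hj with hj' | hj'
      · exact ih i j hi' hj'
      · -- j = n, i < n : use alpha
        subst hj'
        rcases alpha_spec X j with ⟨h0, hnone⟩ | ⟨q, hq, hqn, hle, hmax⟩
        · rcases alpha_spec Y j with ⟨_, hnoneY⟩ | ⟨q, hq, _, _, _⟩
          · exact iff_of_false (hnone i hi') (hnoneY i hi')
          · rw [← hA j hjN, h0] at hq; exact absurd hq (by omega)
        · rcases alpha_spec Y j with ⟨h0Y, _⟩ | ⟨q', hq', hqn', hle', hmax'⟩
          · rw [← hA j hjN, hq] at h0Y; exact absurd h0Y (by omega)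
          · rw [← hA j hjN, hq] at hq'
            have hqq : q' = q := by omega
            rw [hqq] at hle' hmax'
            constructor
            · intro hxy
              exact le_trans ((ih i q hi' hqn).mp (hmax i hi' hxy)) hle'
            · intro hxy
              exact le_trans ((ih i q hi' hqn).mpr (hmax' i hi' hxy)) hle
    · subst hi'
      rcases Nat.lt_succ_iff_lt_or_eq.mp hj with hj' | hj'
      · -- i = n, j < n : use beta
        rcases beta_spec X i with ⟨h0, hnone⟩ | ⟨q, hq, hqn, hle, hmin⟩
        · rcases beta_spec Y i with ⟨_, hnoneY⟩ | ⟨q, hq, _, _, _⟩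
          · exact iff_of_false (hnone j hj') (hnoneY j hj')
          · rw [← hB i hjN, h0] at hq; exact absurd hq (by omega)
        · rcases beta_spec Y i with ⟨h0Y, _⟩ | ⟨q', hq', hqn', hle', hmin'⟩
          · rw [← hB i hjN, hq] at h0Y; exact absurd h0Y (by omega)
          · rw [← hB i hjN, hq] at hq'
            have hqq : q' = q := by omega
            rw [hqq] at hle' hmin'
            constructor
            · intro hxy
              exact le_trans hle' ((ih q j hqn hj').mp (hmin j hj' hxy))
            · intro hxy
              exact le_trans hle ((ih q j hqn hj').mpr (hmin' j hj' hxy))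
      · subst hj'; simp

end Aux

theorem stmt6 {α : Type*} [LinearOrder α] [Inhabited α] (X Y : List α)
    (h : X.length = Y.length) :
    opMatch X Y ↔ code X = code Y := by
  constructor
  · rintro ⟨-, hcmp⟩
    unfold code
    rw [← h]
    apply List.map_congr_left
    intro p hp
    have hp' : p < X.length := List.mem_range.mp hp
    have hloc : ∀ i j, i ≤ p → j ≤ p →
        (X.getD i default ≤ X.getD j default ↔ Y.getD i default ≤ Y.getD j default) := by
      intro i j hi hj
      exact hcmp i j (lt_of_le_of_lt hi hp') (lt_of_le_of_lt hj hp')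
    exact Prod.ext (alpha_congr X Y p hloc) (beta_congr X Y p hloc)
  · intro hcode
    have hpt : ∀ p < X.length, alphaAt X p = alphaAt Y p ∧ betaAt X p = betaAt Y p := by
      intro p hp
      unfold code at hcode
      rw [← h] at hcode
      have h2 := congrArg (fun l => l.getD p (0, 0)) hcode
      simp only [List.getD_eq_getElem?_getD, List.getElem?_map, List.getElem?_range, hp] at h2
      simp only [Option.map_some, Option.getD_some] at h2
      exact ⟨congrArg Prod.fst h2, congrArg Prod.snd h2⟩
    refine ⟨h, fun i j hi hj => back_aux X Y X.length
      (fun p hp => (hpt p hp).1) (fun p hp => (hpt p hp).2)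
      X.length le_rfl i j hi hj⟩
end

section
/- Let P be a string with P ≈rc reverse(P) where ≈rc is complementary matching via an involution f. If a substring P[i..j] satisfies P[i..j] ≈rc reverse(P[i..j]), then P[|P|-j+1..|P|-i+1] ≈rc reverse(P[|P|-j+1..|P|-i+1]). -/
theorem stmt12 {α : Type*} (f : α → α) (hf : ∀ a, f (f a) = a)
    (P : List α) (hP : P = P.reverse.map f)
    (i j : ℕ) (h1 : 1 ≤ i) (hij : i ≤ j) (hj : j ≤ P.length)
    (hpal : sub P i j = (sub P i j).reverse.map f) :
    sub P (P.length - j + 1) (P.length - i + 1) =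
      (sub P (P.length - j + 1) (P.length - i + 1)).reverse.map f := by
  set n := P.length with hn
  have key : sub P (n - j + 1) (n - i + 1) = (sub P i j).reverse.map f := by
    apply List.ext_getElem
    · simp [sub]; omega
    · intro t h1t h2t
      have hlen1 : (sub P (n - j + 1) (n - i + 1)).length = j - i + 1 := by
        simp [sub]; omega
      have hlen2 : (sub P i j).length = j - i + 1 := by
        simp [sub]; omega
      have ht : t < j - i + 1 := hlen1 ▸ h1t
      have e1 : (sub P (n - j + 1) (n - i + 1))[t] = P[n - j + t]'(by omega) := by
        simp only [sub, List.getElem_take, List.getElem_drop]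
        congr 1
      have e2 : ((sub P i j).reverse.map f)[t] =
          f (P[i - 1 + (j - i - t)]'(by omega)) := by
        rw [List.getElem_map, List.getElem_reverse]
        congr 1
        simp only [sub, List.getElem_take, List.getElem_drop]
        congr 1
        simp only [List.length_take, List.length_drop]
        omega
      rw [e1, e2]
      rw [List.getElem_of_eq hP (by omega)]
      rw [List.getElem_map, List.getElem_reverse]
      congr 1
      simp only [show P.length - 1 - (n - j + t) = i - 1 + (j - i - t) from by omega]
  rw [key, ← hpal]
  exact hpal
end

section
/- Suppose T[i..j] is a parameterized rev-palindrome (T[i..j] ≈para reverse(T[i..j])) with 1 < i and j < n. Then T[i−1..j+1] is a parameterized rev-palindrome if and only if the last elements of the previous encodings agree: PE_{T[i−1..j+1]}[j−i+3] = PE_{reverse(T[i−1..j+1])}[j−i+3]. -/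
/-- `X` and `Y` parameterized match: a bijection of the alphabet sends `Y` to `X`. -/
def pmatch {π : Type*} (X Y : List π) : Prop := ∃ f : π ≃ π, X = Y.map f

section aux
variable {π : Type*} [DecidableEq π]
set_option linter.unusedSectionVars false

lemma getElem?_pmatch (X Y : List π) (h : pmatch X Y) (p q : ℕ) :
    X[p]? = X[q]? ↔ Y[p]? = Y[q]? := by
  obtain ⟨f, rfl⟩ := h
  simp only [List.getElem?_map]
  exact ⟨fun h => Option.map_injective f.injective h, fun h => by rw [h]⟩

lemma peAt_pmatch (X Y : List π) (h : pmatch X Y) (p : ℕ) : peAt X p = peAt Y p := by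
  unfold peAt
  have : (List.range p).filter (fun q => X[q]? = X[p]?) =
      (List.range p).filter (fun q => Y[q]? = Y[p]?) := by
    apply List.filter_congr
    intro q _
    simp only [decide_eq_decide]
    exact getElem?_pmatch X Y h q p
  rw [this]

lemma pe_pmatch (X Y : List π) (h : pmatch X Y) : pe X = pe Y := by
  have hl : X.length = Y.length := by obtain ⟨f, rfl⟩ := h; simp
  unfold pe
  rw [hl]
  exact List.map_congr_left (fun p _ => peAt_pmatch X Y h p)

lemma pe_getD (L : List π) (p : ℕ) (hp : p < L.length) :
    (pe L).getD p 0 = peAt L p := by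
  unfold pe
  rw [List.getD_eq_getElem _ _ (by simpa using hp)]
  simp

lemma peAt_spec (L : List π) (p : ℕ) :
    (peAt L p = 0 ∧ ∀ q, q < p → L[q]? ≠ L[p]?) ∨
    (0 < peAt L p ∧ peAt L p ≤ p ∧ L[p - peAt L p]? = L[p]? ∧
      ∀ q, p - peAt L p < q → q < p → L[q]? ≠ L[p]?) := by
  rcases h : ((List.range p).filter (fun q => L[q]? = L[p]?)).max? with _ | q
  · left
    rw [List.max?_eq_none_iff] at h
    refine ⟨by unfold peAt; rw [h]; rfl, fun q hq heq => ?_⟩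
    have hm : q ∈ (List.range p).filter (fun q => L[q]? = L[p]?) := by
      simp [List.mem_filter, List.mem_range, hq, heq]
    rw [h] at hm
    simp at hm
  · have hs := List.max?_eq_some_iff.mp h
    obtain ⟨hmem, hmax⟩ := hs
    simp only [List.mem_filter, List.mem_range, decide_eq_true_eq] at hmem
    obtain ⟨hqp, heq⟩ := hmem
    right
    have hval : peAt L p = p - q := by unfold peAt; rw [h]
    refine ⟨by omega, by omega, ?_, ?_⟩
    · rw [hval, show p - (p - q) = q by omega]; exact heq
    · intro r hr1 hr2 heqr
      have hm : r ∈ (List.range p).filter (fun q => L[q]? = L[p]?) := by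
        simp [List.mem_filter, List.mem_range, hr2, heqr]
      have := hmax r hm
      omega

lemma pmatch_of_patt (X : List π) (n : ℕ) (hX : X.length = n + 1)
    (h : ∀ p q, p ≤ n → q ≤ n → (X[p]? = X[q]? ↔ X[n - p]? = X[n - q]?)) :
    pmatch X X.reverse := by
  have hb : ∀ p, p ≤ n → p < X.length := by omega
  set D := X.toFinset with hD
  have hidx : ∀ a : π, a ∈ X → X.idxOf a ≤ n := by
    intro a ha
    have := List.idxOf_lt_length_iff.mpr ha
    omega
  set g : {x : π // x ∈ D} → {x : π // x ∈ D} := fun a =>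
    ⟨X[n - X.idxOf a.1]'(hb _ (by omega)),
      List.mem_toFinset.mpr (List.getElem_mem _)⟩ with hg
  have hmemX : ∀ a : {x : π // x ∈ D}, a.1 ∈ X := fun a => List.mem_toFinset.mp a.2
  have key : ∀ (a : {x : π // x ∈ D}) (p : ℕ) (hp : p ≤ n), X[p]'(hb _ hp) = a.1 →
      (g a).1 = X[n - p]'(hb _ (by omega)) := by
    intro a p hp hpa
    have hia := hidx a.1 (hmemX a)
    have h1 : X[X.idxOf a.1]'(hb _ hia) = a.1 := List.getElem_idxOf _
    have h2 : X[X.idxOf a.1]? = X[p]? := by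
      rw [List.getElem?_eq_getElem (hb _ hia), List.getElem?_eq_getElem (hb _ hp), h1, hpa]
    have h3 := (h _ p hia hp).mp h2
    rw [List.getElem?_eq_getElem (hb _ (by omega : n - X.idxOf a.1 ≤ n)),
      List.getElem?_eq_getElem (hb _ (by omega : n - p ≤ n))] at h3
    exact Option.some.inj h3
  have ginj : Function.Injective g := by
    intro a b hab
    have hia := hidx a.1 (hmemX a)
    have hib := hidx b.1 (hmemX b)
    have h1 : X[n - X.idxOf a.1]? = X[n - X.idxOf b.1]? := by
      rw [List.getElem?_eq_getElem (hb _ (by omega : n - X.idxOf a.1 ≤ n)),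
        List.getElem?_eq_getElem (hb _ (by omega : n - X.idxOf b.1 ≤ n))]
      exact congrArg some (congrArg Subtype.val hab)
    have h2 := (h (X.idxOf a.1) (X.idxOf b.1) hia hib).mpr h1
    rw [List.getElem?_eq_getElem (hb _ hia), List.getElem?_eq_getElem (hb _ hib)] at h2
    have := Option.some.inj h2
    rw [List.getElem_idxOf, List.getElem_idxOf] at this
    exact Subtype.ext this
  have gbij := Finite.injective_iff_bijective.mp ginj
  set e : Equiv.Perm {x : π // x ∈ D} := Equiv.ofBijective g gbij with he
  refine ⟨e.extendDomain (Equiv.refl {x : π // x ∈ D}), ?_⟩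
  apply List.ext_getElem (by simp)
  intro p h1 h2
  have hp : p ≤ n := by omega
  simp only [List.getElem_map, List.getElem_reverse]
  have hrl : X.length - 1 - p = n - p := by omega
  have hmem : X[n - p]'(hb _ (by omega)) ∈ D := List.mem_toFinset.mpr (List.getElem_mem _)
  have hext := Equiv.Perm.extendDomain_apply_subtype e (Equiv.refl {x : π // x ∈ D})
    (b := X[n - p]'(hb _ (by omega))) hmem
  rw [show X[X.length - 1 - p]'(by omega) = X[n - p]'(hb _ (by omega)) from by congr 1]
  rw [hext]
  simp only [Equiv.refl_symm, Equiv.refl_apply]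
  have := key ⟨X[n - p]'(hb _ (by omega)), hmem⟩ (n - p) (by omega) rfl
  simp only [Nat.sub_sub_self hp] at this
  exact this.symm

lemma key_ext (W : List π) (m : ℕ) (hW : W.length = m + 3)
    (mid : ∀ p q, 1 ≤ p → p ≤ m + 1 → 1 ≤ q → q ≤ m + 1 →
      (W[p]? = W[q]? ↔ W[m + 2 - p]? = W[m + 2 - q]?))
    (hd : peAt W (m + 2) = peAt W.reverse (m + 2)) :
    ∀ p q, p ≤ m + 2 → q ≤ m + 2 → (W[p]? = W[q]? ↔ W[m + 2 - p]? = W[m + 2 - q]?) := by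
  have hrev : ∀ q, q ≤ m + 2 → W.reverse[q]? = W[m + 2 - q]? := by
    intro q hq
    rw [List.getElem?_reverse (by omega), hW, show m + 3 - 1 - q = m + 2 - q from by omega]
  have claim0 : ∀ q, 1 ≤ q → q ≤ m + 1 → (W[0]? = W[q]? ↔ W[m + 2]? = W[m + 2 - q]?) := by
    intro q hq1 hq2
    rcases peAt_spec W (m + 2) with ⟨hz, hnone⟩ | ⟨hpos, hle, hocc, hmax⟩ <;>
      rcases peAt_spec W.reverse (m + 2) with ⟨hz', hnone'⟩ | ⟨hpos', hle', hocc', hmax'⟩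
    · constructor
      · intro h0
        exfalso
        have := hnone' (m + 2 - q) (by omega)
        rw [hrev (m + 2 - q) (by omega), hrev (m + 2) le_rfl] at this
        rw [show m + 2 - (m + 2 - q) = q by omega, show m + 2 - (m + 2) = 0 by omega] at this
        exact this h0.symm
      · intro h0
        exfalso
        exact hnone (m + 2 - q) (by omega) h0.symm
    · omega
    · omega
    · rw [hrev (m + 2 - peAt W.reverse (m + 2)) (by omega), hrev (m + 2) le_rfl] at hocc'
      rw [show m + 2 - (m + 2 - peAt W.reverse (m + 2)) = peAt W.reverse (m + 2) by omega,
        show m + 2 - (m + 2) = 0 by omega] at hocc'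
      set d := peAt W (m + 2) with hdd
      rw [← hd] at hocc' hmax' hle' hpos'
      rcases Nat.lt_or_ge d (m + 2) with hdlt | hdge
      · rw [← hocc', ← hocc]
        exact mid d q (by omega) (by omega) hq1 hq2
      · have hdeq : d = m + 2 := by omega
        constructor
        · intro h0
          exfalso
          have := hmax' (m + 2 - q) (by omega) (by omega)
          rw [hrev (m + 2 - q) (by omega), hrev (m + 2) le_rfl,
            show m + 2 - (m + 2 - q) = q by omega, show m + 2 - (m + 2) = 0 by omega] at this
          exact this h0.symm
        · intro h0
          exfalso
          have := hmax (m + 2 - q) (by omega) (by omega)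
          exact this h0.symm
  have claim0' : ∀ q, 1 ≤ q → q ≤ m + 1 → (W[m + 2]? = W[q]? ↔ W[0]? = W[m + 2 - q]?) := by
    intro q hq1 hq2
    have := claim0 (m + 2 - q) (by omega) (by omega)
    rw [show m + 2 - (m + 2 - q) = q by omega] at this
    exact this.symm
  intro p q hp hq
  rcases Nat.eq_zero_or_pos p with rfl | hp1
  · rcases Nat.eq_zero_or_pos q with rfl | hq1
    · simp [show m + 2 - 0 = m + 2 by omega]
    · rcases Nat.lt_or_ge q (m + 2) with hqlt | hqge
      · exact claim0 q hq1 (by omega)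
      · have hqe : q = m + 2 := by omega
        subst hqe
        rw [show m + 2 - 0 = m + 2 by omega, show m + 2 - (m + 2) = 0 by omega]
        exact eq_comm
  · rcases Nat.lt_or_ge p (m + 2) with hplt | hpge
    · rcases Nat.eq_zero_or_pos q with rfl | hq1
      · rw [show m + 2 - 0 = m + 2 by omega]
        have := claim0 p hp1 (by omega)
        exact ⟨fun h => (this.mp h.symm).symm, fun h => (this.mpr h.symm).symm⟩
      · rcases Nat.lt_or_ge q (m + 2) with hqlt | hqge
        · exact mid p q hp1 (by omega) hq1 (by omega)
        · have hqe : q = m + 2 := by omega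
          subst hqe
          rw [show m + 2 - (m + 2) = 0 by omega]
          have := claim0' p hp1 (by omega)
          exact ⟨fun h => (this.mp h.symm).symm, fun h => (this.mpr h.symm).symm⟩
    · have hpe : p = m + 2 := by omega
      subst hpe
      rw [show m + 2 - (m + 2) = 0 by omega]
      rcases Nat.eq_zero_or_pos q with rfl | hq1
      · rw [show m + 2 - 0 = m + 2 by omega]
        exact eq_comm
      · rcases Nat.lt_or_ge q (m + 2) with hqlt | hqge
        · exact claim0' q hq1 (by omega)
        · have hqe : q = m + 2 := by omega
          subst hqe
          simp
end aux

theorem stmt17 {π : Type*} [DecidableEq π] (T : List π) (i j : ℕ)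
    (h2 : 2 ≤ i) (hij : i ≤ j) (hj : j < T.length)
    (hp : pmatch (sub T i j) (sub T i j).reverse) :
    pmatch (sub T (i - 1) (j + 1)) (sub T (i - 1) (j + 1)).reverse ↔
      (pe (sub T (i - 1) (j + 1))).getD (j - i + 2) 0 =
        (pe ((sub T (i - 1) (j + 1)).reverse)).getD (j - i + 2) 0 := by
  set m := j - i with hm
  set a := i - 2 with ha
  have hWdef : sub T (i - 1) (j + 1) = (T.drop a).take (m + 3) := by
    unfold sub
    rw [show i - 1 - 1 = a by omega, show j + 1 - (i - 1) + 1 = m + 3 by omega]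
  have hSdef : sub T i j = (T.drop (a + 1)).take (m + 1) := by
    unfold sub
    rw [show i - 1 = a + 1 by omega, show j - i + 1 = m + 1 by omega]
  rw [hWdef]
  rw [hSdef] at hp
  set W := (T.drop a).take (m + 3) with hWW
  set S := (T.drop (a + 1)).take (m + 1) with hSS
  have hlenW : W.length = m + 3 := by
    simp only [hWW, List.length_take, List.length_drop]
    omega
  have hlenS : S.length = m + 1 := by
    simp only [hSS, List.length_take, List.length_drop]
    omega
  have hWq : ∀ p, p < m + 3 → W[p]? = T[a + p]? := by
    intro p hpp
    rw [hWW, List.getElem?_take, if_pos hpp, List.getElem?_drop]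
  have hSq : ∀ p, p < m + 1 → S[p]? = T[a + 1 + p]? := by
    intro p hpp
    rw [hSS, List.getElem?_take, if_pos hpp, List.getElem?_drop]
  have mid : ∀ p q, 1 ≤ p → p ≤ m + 1 → 1 ≤ q → q ≤ m + 1 →
      (W[p]? = W[q]? ↔ W[m + 2 - p]? = W[m + 2 - q]?) := by
    intro p q hp1 hp2 hq1 hq2
    have h1 := getElem?_pmatch _ _ hp (p - 1) (q - 1)
    rw [List.getElem?_reverse (by rw [hlenS]; omega : p - 1 < S.length),
        List.getElem?_reverse (by rw [hlenS]; omega : q - 1 < S.length), hlenS] at h1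
    rw [hSq (p - 1) (by omega), hSq (q - 1) (by omega),
        hSq (m + 1 - 1 - (p - 1)) (by omega), hSq (m + 1 - 1 - (q - 1)) (by omega)] at h1
    rw [hWq p (by omega), hWq q (by omega), hWq (m + 2 - p) (by omega),
        hWq (m + 2 - q) (by omega)]
    rw [show a + 1 + (p - 1) = a + p by omega, show a + 1 + (q - 1) = a + q by omega,
        show a + 1 + (m + 1 - 1 - (p - 1)) = a + (m + 2 - p) by omega,
        show a + 1 + (m + 1 - 1 - (q - 1)) = a + (m + 2 - q) by omega] at h1
    exact h1
  constructor
  · intro hpm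
    rw [pe_pmatch _ _ hpm]
  · intro hgd
    have hd : peAt W (m + 2) = peAt W.reverse (m + 2) := by
      rw [pe_getD W (m + 2) (by omega), pe_getD W.reverse (m + 2) (by simp [hlenW])] at hgd
      exact hgd
    exact pmatch_of_patt W (m + 2) (by omega) (key_ext W m hlenW mid hd)
end

section
/- Palindromic-structure matching is substring-consistent: if two equal-length strings X and Y have, for every center position, maximal palindromes of equal length (X ≈pal Y), then X[i..j] ≈pal Y[i..j] for all 1 ≤ i ≤ j ≤ |X|. -/
/-- length of the maximal palindrome of `S` whose center is `c / 2`
(`c = i + j` ranges over twice the centers; positions are 1-indexed). -/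
noncomputable def maxPalLen {α : Type*} (S : List α) (c : ℕ) : ℕ :=
  sSup {ℓ : ℕ | ∃ i j : ℕ, i + j = c ∧ 1 ≤ i ∧ i ≤ j + 1 ∧ j ≤ S.length ∧
    ℓ = j + 1 - i ∧ sub S i j = (sub S i j).reverse}

/-- `X` and `Y` palindromic-structure match. -/
def palMatch {α : Type*} (X Y : List α) : Prop :=
  X.length = Y.length ∧ ∀ c : ℕ, maxPalLen X c = maxPalLen Y c


section Aux

open List

variable {α : Type*}

/-- The set whose sup is `maxPalLen`. -/
def PalSet (S : List α) (c : ℕ) : Set ℕ :=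
  {ℓ : ℕ | ∃ i j : ℕ, i + j = c ∧ 1 ≤ i ∧ i ≤ j + 1 ∧ j ≤ S.length ∧
    ℓ = j + 1 - i ∧ sub S i j = (sub S i j).reverse}

lemma maxPalLen_eq (S : List α) (c : ℕ) : maxPalLen S c = sSup (PalSet S c) := rfl

lemma pal_of_len_le_one {l : List α} (h : l.length ≤ 1) : l = l.reverse := by
  match l, h with
  | [], _ => rfl
  | [a], _ => rfl

lemma sub_len_le_one (S : List α) {i j : ℕ} (h : j ≤ i) : (sub S i j).length ≤ 1 := by
  simp only [sub, List.length_take, List.length_drop]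
  omega

lemma sub_length (S : List α) {i j : ℕ} (h1 : 1 ≤ i) (hij : i ≤ j) (hj : j ≤ S.length) :
    (sub S i j).length = j - i + 1 := by
  simp only [sub, List.length_take, List.length_drop]
  omega

lemma sub_sub' (X : List α) {i j i' j' : ℕ} (h1 : 1 ≤ i) (h1' : 1 ≤ i') (hij : i ≤ j)
    (hij' : i' ≤ j') (hj' : j' ≤ j - i + 1) :
    sub (sub X i j) i' j' = sub X (i + i' - 1) (i + j' - 1) := by
  simp only [sub, List.drop_take, List.take_take, List.drop_drop]
  congr 1
  · omega
  · congr 1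
    omega

lemma pal_trim {l : List α} (h : l = l.reverse) :
    (l.drop 1).dropLast = ((l.drop 1).dropLast).reverse := by
  have hp : l.Palindrome := List.Palindrome.of_reverse_eq h.symm
  cases hp with
  | nil => rfl
  | singleton x => rfl
  | cons_concat x hl =>
    rename_i l'
    simp only [List.drop_one, List.tail_cons, List.dropLast_concat]
    exact (List.Palindrome.reverse_eq hl).symm

lemma trim_eq (S : List α) {i j : ℕ} (h1 : 1 ≤ i) (hij : i + 2 ≤ j) (hj : j ≤ S.length) :
    sub S (i + 1) (j - 1) = ((sub S i j).drop 1).dropLast := by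
  simp only [sub, List.drop_take, List.drop_drop, List.dropLast_eq_take, List.take_take,
    List.length_take, List.length_drop]
  congr 1
  · omega
  · congr 1
    omega

lemma palset_step (S : List α) {c ℓ : ℕ} (h : ℓ + 2 ∈ PalSet S c) : ℓ ∈ PalSet S c := by
  obtain ⟨i, j, hc, hi, hij, hjl, hl, hpal⟩ := h
  refine ⟨i + 1, j - 1, by omega, by omega, by omega, by omega, by omega, ?_⟩
  rcases Nat.lt_or_ge ℓ 1 with h0 | h0
  · exact pal_of_len_le_one (sub_len_le_one S (by omega))
  · rw [show j - 1 = (i + 1) - 1 + (j - i - 1) by omega] at *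
    have := trim_eq S hi (by omega) hjl
    rw [show i + 1 - 1 + (j - i - 1) = j - 1 by omega, this]
    exact pal_trim hpal

lemma palset_descend (S : List α) {c ℓ : ℕ} (n : ℕ) (h : ℓ + 2 * n ∈ PalSet S c) :
    ℓ ∈ PalSet S c := by
  induction n with
  | zero => simpa using h
  | succ k ih =>
    exact ih (palset_step S (by rw [show ℓ + 2 * k + 2 = ℓ + 2 * (k + 1) by omega]; exact h))

lemma palset_parity (S : List α) {c ℓ : ℕ} (h : ℓ ∈ PalSet S c) : (ℓ + c) % 2 = 1 := by
  obtain ⟨i, j, hc, hi, hij, hjl, hl, hpal⟩ := h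
  omega

lemma palset_bdd (S : List α) (c : ℕ) : BddAbove (PalSet S c) := by
  refine ⟨S.length + 1, fun ℓ h => ?_⟩
  obtain ⟨i, j, hc, hi, hij, hjl, hl, hpal⟩ := h
  omega

lemma palset_nonempty_iff (S : List α) (c : ℕ) :
    (PalSet S c).Nonempty ↔
      (c % 2 = 1 ∧ c ≤ 2 * S.length + 1) ∨ (c % 2 = 0 ∧ 2 ≤ c ∧ c ≤ 2 * S.length) := by
  constructor
  · rintro ⟨ℓ, i, j, hc, hi, hij, hjl, hl, hpal⟩
    omega
  · rintro (⟨hpar, hle⟩ | ⟨hpar, h2, hle⟩)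
    · exact ⟨0, c / 2 + 1, c / 2, by omega, by omega, by omega, by omega, by omega,
        pal_of_len_le_one (sub_len_le_one S (by omega))⟩
    · exact ⟨1, c / 2, c / 2, by omega, by omega, by omega, by omega, by omega,
        pal_of_len_le_one (sub_len_le_one S (by omega))⟩

lemma palset_mem_iff (S : List α) (c ℓ : ℕ) :
    ℓ ∈ PalSet S c ↔
      (PalSet S c).Nonempty ∧ (ℓ + c) % 2 = 1 ∧ ℓ ≤ sSup (PalSet S c) := by
  constructor
  · intro h
    exact ⟨⟨ℓ, h⟩, palset_parity S h, le_csSup (palset_bdd S c) h⟩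
  · rintro ⟨hne, hpar, hle⟩
    have hsup := Nat.sSup_mem hne (palset_bdd S c)
    have hps := palset_parity S hsup
    obtain ⟨n, hn⟩ : ∃ n, sSup (PalSet S c) = ℓ + 2 * n := ⟨(sSup (PalSet S c) - ℓ) / 2, by omega⟩
    exact palset_descend S n (hn ▸ hsup)

lemma palset_transfer (X : List α) {i j : ℕ} (c : ℕ) (h1 : 1 ≤ i) (hij : i ≤ j)
    (hj : j ≤ X.length) (ℓ : ℕ) :
    ℓ ∈ PalSet (sub X i j) c ↔
      ℓ ∈ PalSet X (c + 2 * (i - 1)) ∧ ℓ + 1 ≤ c ∧ ℓ + c ≤ 2 * (j - i + 1) + 1 := by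
  have hlen := sub_length X h1 hij hj
  constructor
  · rintro ⟨i', j', hc, hi', hij', hjl', hl, hpal⟩
    rw [hlen] at hjl'
    refine ⟨⟨i + i' - 1, i + j' - 1, by omega, by omega, by omega, by omega, by omega, ?_⟩,
      by omega, by omega⟩
    rcases Nat.lt_or_ge j' i' with hlt | hge
    · exact pal_of_len_le_one (sub_len_le_one X (by omega))
    · rw [← sub_sub' X h1 hi' hij hge hjl']
      exact hpal
  · rintro ⟨⟨i'', j'', hc, hi'', hij'', hjl'', hl, hpal⟩, hb1, hb2⟩
    have hii : i ≤ i'' := by omega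
    have hjj : j'' ≤ j := by omega
    refine ⟨i'' + 1 - i, j'' + 1 - i, by omega, by omega, by omega, by rw [hlen]; omega,
      by omega, ?_⟩
    rcases Nat.lt_or_ge j'' i'' with hlt | hge
    · exact pal_of_len_le_one (sub_len_le_one (sub X i j) (by omega))
    · rw [sub_sub' X h1 (by omega) hij (by omega) (by omega),
        show i + (i'' + 1 - i) - 1 = i'' by omega, show i + (j'' + 1 - i) - 1 = j'' by omega]
      exact hpal

end Aux

theorem stmt19 {α : Type*} (X Y : List α) (h : palMatch X Y)
    (i j : ℕ) (h1 : 1 ≤ i) (hij : i ≤ j) (hj : j ≤ X.length) :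
    palMatch (sub X i j) (sub Y i j) := by
  obtain ⟨hlen, hsup⟩ := h
  have hjY : j ≤ Y.length := hlen ▸ hj
  have setEq : ∀ c, PalSet X c = PalSet Y c := by
    intro c
    ext ℓ
    rw [palset_mem_iff, palset_mem_iff, palset_nonempty_iff, palset_nonempty_iff, hlen,
      ← maxPalLen_eq, ← maxPalLen_eq, hsup c]
  constructor
  · rw [sub_length X h1 hij hj, sub_length Y h1 hij hjY]
  · intro c
    rw [maxPalLen_eq, maxPalLen_eq]
    congr 1
    ext ℓ
    rw [palset_transfer X c h1 hij hj, palset_transfer Y c h1 hij hjY, setEq]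
end
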